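/- Let a(x,t) = -k( (√3/3) i + tanh η ) with η = (1/2)(k x - k^5 t + c), k real, c real. Then u₁ := -3 a_x = (3/2) k^2 sech^2 η is real-valued, and a satisfies a_xx = -(1/4)a^3 + (3/2) a a_x - 2λ₀ with λ₀ = (i/(3√3)) k^3. -/

import Mathlib

open Complex

/-- Partial derivative in the first (spatial) variable. -/
noncomputable def dx (u : ℝ → ℝ → ℂ) : ℝ → ℝ → ℂ := fun x t => deriv (fun y => u y t) x



lemma alg_main (K S C z : ℂ) (hC : C ≠ 0) (hSC : C^2 - S^2 = 1) (hz : z^2 = -(1/3)) :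
    (K^3/2) * (S/C^3) = -(1/4)*(-(K)*(z + S/C))^3
      + (3/2)*(-(K)*(z + S/C))*(-(K)*((K/2)*(1/C)^2)) - 2*(-(z^3)*K^3) := by
  have hT : S/C^3 = (S/C) - (S/C)^3 := by
    field_simp
    linear_combination (-S) * hSC
  have hsech : (1/C)^2 = 1 - (S/C)^2 := by
    field_simp
    linear_combination (-1 : ℂ) * hSC
  rw [hT, hsech]
  set T := S/C
  linear_combination ((-9*K^3/4)*z - (3*K^3/4)*(S/C)) * hz

-- derivative of the phase
lemma hEta (k c t x : ℝ) :
    HasDerivAt (fun y : ℝ => (1/2) * (k*y - k^5*t + c)) (k/2) x := by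
  have h : HasDerivAt (fun y : ℝ => k*y - k^5*t + c) k x := by
    simpa using (((hasDerivAt_id x).const_mul k).sub_const (k^5*t)).add_const c
  have h2 := h.const_mul (1/2 : ℝ)
  rw [show k/2 = 1/2*k by ring]; exact h2

-- derivative of tanh ∘ η as real function
lemma hTanhEta (k c t x : ℝ) :
    HasDerivAt (fun y : ℝ => Real.tanh ((1/2) * (k*y - k^5*t + c)))
      ((k/2) * (1 / Real.cosh ((1/2) * (k*x - k^5*t + c)))^2) x := by
  set η := fun y : ℝ => (1/2) * (k*y - k^5*t + c) with hη
  have hC : Real.cosh (η x) ≠ 0 := ne_of_gt (Real.cosh_pos _)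
  have hs : HasDerivAt (fun y => Real.sinh (η y)) (Real.cosh (η x) * (k/2)) x :=
    (Real.hasDerivAt_sinh (η x)).comp x (hEta k c t x)
  have hc : HasDerivAt (fun y => Real.cosh (η y)) (Real.sinh (η x) * (k/2)) x :=
    (Real.hasDerivAt_cosh (η x)).comp x (hEta k c t x)
  have hd := hs.div hc hC
  have hsq := Real.cosh_sq_sub_sinh_sq (η x)
  have : (Real.cosh (η x) * (k/2) * Real.cosh (η x) - Real.sinh (η x) * (Real.sinh (η x) * (k/2)))
      / Real.cosh (η x) ^ 2 = (k/2) * (1 / Real.cosh (η x))^2 := by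
    field_simp
    linear_combination k * hsq
  rw [this] at hd
  simp only [Real.tanh_eq_sinh_div_cosh]
  exact hd

-- derivative of sech² ∘ η
lemma hSechSq (k c t x : ℝ) :
    HasDerivAt (fun y : ℝ => (1 / Real.cosh ((1/2) * (k*y - k^5*t + c)))^2)
      (-(k) * Real.sinh ((1/2) * (k*x - k^5*t + c)) / Real.cosh ((1/2) * (k*x - k^5*t + c))^3) x := by
  set η := fun y : ℝ => (1/2) * (k*y - k^5*t + c) with hη
  have hC : Real.cosh (η x) ≠ 0 := ne_of_gt (Real.cosh_pos _)
  have hc : HasDerivAt (fun y => Real.cosh (η y)) (Real.sinh (η x) * (k/2)) x :=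
    (Real.hasDerivAt_cosh (η x)).comp x (hEta k c t x)
  have hinv := hc.inv hC
  have h2 := hinv.pow 2
  have : (2 : ℕ) * (Real.cosh (η x))⁻¹ ^ (2-1) * (-(Real.sinh (η x) * (k/2)) / Real.cosh (η x) ^ 2)
      = -(k) * Real.sinh (η x) / Real.cosh (η x)^3 := by
    rw [show (2:ℕ)-1 = 1 from rfl, pow_one, Nat.cast_ofNat]
    ring
  rw [Pi.inv_apply, this] at h2
  have hfun : (fun y : ℝ => (1 / Real.cosh ((1/2) * (k*y - k^5*t + c)))^2)
      = (fun y => ((Real.cosh (η y)))⁻¹ ^ 2) := by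
    funext y; rw [one_div]
  rw [hfun]
  exact h2

lemma hz_sq : ((Real.sqrt 3 : ℂ)/3 * Complex.I)^2 = -(1/3) := by
  have h3 : ((Real.sqrt 3 : ℝ) : ℂ)^2 = 3 := by
    norm_cast
    rw [Real.sq_sqrt] <;> norm_num
  linear_combination (Complex.I^2/9) * h3 + (1/3 : ℂ) * Complex.I_sq

lemma hlz : Complex.I / (3 * (Real.sqrt 3 : ℂ)) = -(((Real.sqrt 3 : ℂ)/3 * Complex.I)^3) := by
  have h3 : ((Real.sqrt 3 : ℝ) : ℂ)^2 = 3 := by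
    norm_cast
    rw [Real.sq_sqrt] <;> norm_num
  have hne : ((Real.sqrt 3 : ℝ) : ℂ) ≠ 0 := by
    simpa using (by positivity : (0:ℝ) < Real.sqrt 3).ne'
  field_simp
  linear_combination (Complex.I^2*(((Real.sqrt 3 : ℂ))^2+3)) * h3 + (9:ℂ) * Complex.I_sq


/-- For the complex Darboux variable `a = -k((√3/3) i + tanh η)` with
`η = (1/2)(k x - k⁵ t + c)`, the quantity `u₁ = -3 a_x` equals the real 1-soliton
`(3/2) k² sech² η`, and `a` satisfies the vacuum Bäcklund relation
`a_xx = -(1/4)a³ + (3/2) a a_x - 2λ₀` with `λ₀ = (i/(3√3)) k³`. -/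
theorem darboux_vacuum_soliton (k c : ℝ) (lam0 : ℂ) (a : ℝ → ℝ → ℂ)
    (hlam : lam0 = Complex.I / (3 * Real.sqrt 3) * (k : ℂ)^3)
    (ha : a = fun (x t : ℝ) => -(k : ℂ) * ((Real.sqrt 3 / 3) * Complex.I
      + Complex.tanh (((1/2) * (k*x - k^5*t + c) : ℝ) : ℂ))) :
    (∀ x t, -3 * dx a x t
        = (((3/2) * k^2 * (1 / Real.cosh ((1/2) * (k*x - k^5*t + c)))^2 : ℝ) : ℂ)) ∧
    (∀ x t, dx (dx a) x t
        = -(1/4) * (a x t)^3 + (3/2) * a x t * dx a x t - 2 * lam0) := by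
  subst ha hlam
  set z : ℂ := (Real.sqrt 3 : ℂ)/3 * Complex.I with hzdef
  have hdxa : ∀ x t : ℝ, dx (fun (x t : ℝ) => -(k : ℂ) * ((Real.sqrt 3 / 3) * Complex.I
      + Complex.tanh (((1/2) * (k*x - k^5*t + c) : ℝ) : ℂ))) x t
      = -(k : ℂ) * (((k/2) * (1 / Real.cosh ((1/2) * (k*x - k^5*t + c)))^2 : ℝ) : ℂ) := by
    intro x t
    have h := (((hTanhEta k c t x).ofReal_comp).const_add
      ((Real.sqrt 3 / 3 : ℝ) * Complex.I)).const_mul (-(k:ℂ))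
    have : dx (fun (x t : ℝ) => -(k : ℂ) * ((Real.sqrt 3 / 3) * Complex.I
        + Complex.tanh (((1/2) * (k*x - k^5*t + c) : ℝ) : ℂ))) x t
        = deriv (fun y => -(k : ℂ) * ((Real.sqrt 3 / 3) * Complex.I
        + Complex.tanh (((1/2) * (k*y - k^5*t + c) : ℝ) : ℂ))) x := rfl
    rw [this]
    simp only [← Complex.ofReal_tanh]
    push_cast at h ⊢
    exact h.deriv
  constructor
  · intro x t
    rw [hdxa x t]
    push_cast
    ring
  · intro x t
    set η := (1/2) * (k*x - k^5*t + c) with hηdef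
    have hCpos := Real.cosh_pos η
    have hC : ((Real.cosh η : ℝ) : ℂ) ≠ 0 := by exact_mod_cast hCpos.ne'
    have hSC : ((Real.cosh η : ℝ) : ℂ)^2 - ((Real.sinh η : ℝ) : ℂ)^2 = 1 := by
      exact_mod_cast Real.cosh_sq_sub_sinh_sq η
    -- second derivative
    have hdd : dx (dx (fun (x t : ℝ) => -(k : ℂ) * ((Real.sqrt 3 / 3) * Complex.I
        + Complex.tanh (((1/2) * (k*x - k^5*t + c) : ℝ) : ℂ)))) x t
        = -(k:ℂ) * (((k/2) * (-(k) * Real.sinh η / Real.cosh η^3) : ℝ) : ℂ) := by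
      have hfun : (fun y => dx (fun (x t : ℝ) => -(k : ℂ) * ((Real.sqrt 3 / 3) * Complex.I
          + Complex.tanh (((1/2) * (k*x - k^5*t + c) : ℝ) : ℂ))) y t)
          = fun y => -(k : ℂ) * (((k/2) * (1 / Real.cosh ((1/2) * (k*y - k^5*t + c)))^2 : ℝ) : ℂ) := by
        funext y; exact hdxa y t
      have hg : HasDerivAt (fun y : ℝ => (k/2) * (1 / Real.cosh ((1/2) * (k*y - k^5*t + c)))^2)
          ((k/2) * (-(k) * Real.sinh η / Real.cosh η^3)) x := (hSechSq k c t x).const_mul (k/2)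
      have h := (hg.ofReal_comp).const_mul (-(k:ℂ))
      show deriv (fun y => dx _ y t) x = _
      rw [hfun]
      exact h.deriv
    rw [hdd, hdxa x t]
    have htanh : Complex.tanh ((η : ℝ) : ℂ) = ((Real.sinh η : ℝ) : ℂ) / ((Real.cosh η : ℝ) : ℂ) := by
      rw [← Complex.ofReal_tanh, Real.tanh_eq_sinh_div_cosh]
      push_cast; ring
    have key := alg_main (k:ℂ) ((Real.sinh η : ℝ) : ℂ) ((Real.cosh η : ℝ) : ℂ) z hC hSC hz_sq
    have hlhs : -(k:ℂ) * (((k/2) * (-(k) * Real.sinh η / Real.cosh η^3) : ℝ) : ℂ)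
        = ((k:ℂ)^3/2) * (((Real.sinh η : ℝ) : ℂ)/((Real.cosh η : ℝ) : ℂ)^3) := by
      push_cast; ring
    simp only [← hηdef]
    clear hηdef
    clear_value η
    rw [hlhs, key]
    simp only [htanh, hlz]
    push_cast
    ring
  done
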